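/- For all real numbers a, b ≥ 0 and every natural number k, the entire function φ_k defined by φ_k(α) = ∑_{j≥k} α^{j-k}/j! satisfies φ_k(a+b) ≤ (1/2)·φ_k(2a) + (1/2)·φ_k(2b). -/

import Mathlib

lemma ptwise (m : ℕ) {a b : ℝ} (ha : 0 ≤ a) (hb : 0 ≤ b) :
    (a + b) ^ m ≤ (1 / 2) * (2 * a) ^ m + (1 / 2) * (2 * b) ^ m := by
  have hc := (convexOn_pow m).2 (Set.mem_Ici.2 ha) (Set.mem_Ici.2 hb)
    (by norm_num : (0:ℝ) ≤ 1/2) (by norm_num : (0:ℝ) ≤ 1/2) (by norm_num)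
  have h2 : a + b = 2 * ((1/2 : ℝ) * a + (1/2 : ℝ) * b) := by ring
  calc (a + b) ^ m = 2 ^ m * ((1/2 : ℝ) * a + (1/2 : ℝ) * b) ^ m := by
        rw [h2, mul_pow]
    _ ≤ 2 ^ m * ((1/2 : ℝ) * a ^ m + (1/2 : ℝ) * b ^ m) := by
        apply mul_le_mul_of_nonneg_left hc (by positivity)
    _ = (1 / 2) * (2 * a) ^ m + (1 / 2) * (2 * b) ^ m := by
        rw [mul_pow, mul_pow]; ring

lemma summ (k : ℕ) {x : ℝ} (hx : 0 ≤ x) :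
    Summable (fun m : ℕ => x ^ m / (Nat.factorial (m + k) : ℝ)) := by
  apply Summable.of_nonneg_of_le (fun m => by positivity)
    (fun m => ?_) (Real.summable_pow_div_factorial x)
  apply div_le_div_of_nonneg_left (by positivity) (by positivity)
  exact_mod_cast Nat.factorial_le (Nat.le_add_right m k)

/-- For all real `a, b ≥ 0` and every `k : ℕ`, the function
`φ_k(α) = ∑_{j≥k} α^{j-k}/j!` satisfies `φ_k(a+b) ≤ (1/2)φ_k(2a) + (1/2)φ_k(2b)`.
(Index shifted: `j = m + k`.) -/
theorem stmt0 (k : ℕ) (a b : ℝ) (ha : 0 ≤ a) (hb : 0 ≤ b) :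
    (∑' m : ℕ, (a + b) ^ m / (Nat.factorial (m + k) : ℝ)) ≤
      (1 / 2) * (∑' m : ℕ, (2 * a) ^ m / (Nat.factorial (m + k) : ℝ)) +
      (1 / 2) * (∑' m : ℕ, (2 * b) ^ m / (Nat.factorial (m + k) : ℝ)) := by
  have hsa := summ k (by positivity : (0:ℝ) ≤ 2 * a)
  have hsb := summ k (by positivity : (0:ℝ) ≤ 2 * b)
  rw [← tsum_mul_left, ← tsum_mul_left, ← Summable.tsum_add (hsa.mul_left _) (hsb.mul_left _)]
  apply Summable.tsum_le_tsum _ (summ k (by positivity)) ((hsa.mul_left _).add (hsb.mul_left _))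
  intro m
  have := ptwise m ha hb
  have hf : (0:ℝ) < (Nat.factorial (m + k) : ℝ) := by positivity
  rw [div_le_iff₀ hf]
  calc (a + b) ^ m ≤ (1 / 2) * (2 * a) ^ m + (1 / 2) * (2 * b) ^ m := this
    _ = ((1 / 2) * ((2 * a) ^ m / ↑(m + k).factorial) +
        (1 / 2) * ((2 * b) ^ m / ↑(m + k).factorial)) * ↑(m + k).factorial := by
        field_simp
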